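/- For every positive integer n, (2^{n²+n}/n!) · ∏_{j=0}^{n-1} [Γ((n+2+j)/2)·Γ(1/2) / (Γ((1+j)/2)·Γ((1+j)/2)·Γ((4+j)/2))] = 2^{n²} · ∏_{k=1}^{n} Cat(k). -/

import Mathlib

/-- The k-th Catalan number as a real number: Cat(k) = (1/(k+1))·C(2k,k). -/
noncomputable def catR (k : ℕ) : ℝ := (1 / ((k : ℝ) + 1)) * (Nat.choose (2 * k) k : ℝ)

open Real Finset

-- duplication formula, specialized
lemma dup (n : ℕ) :
    Real.Gamma (((n : ℝ) + 1) / 2) * Real.Gamma (((n : ℝ) + 2) / 2) * 2 ^ n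
      = (n.factorial : ℝ) * Real.sqrt π := by
  have h := Real.Gamma_mul_Gamma_add_half (((n : ℝ) + 1) / 2)
  have h1 : ((n : ℝ) + 1) / 2 + 1 / 2 = ((n : ℝ) + 2) / 2 := by ring
  have h2 : 2 * (((n : ℝ) + 1) / 2) = (n : ℝ) + 1 := by ring
  rw [h1, h2] at h
  have h3 : (1 : ℝ) - ((n : ℝ) + 1) = -(n : ℝ) := by ring
  rw [h3] at h
  have h4 : (2 : ℝ) ^ (-(n : ℝ)) = ((2 : ℝ) ^ n)⁻¹ := by
    rw [Real.rpow_neg (by norm_num), Real.rpow_natCast]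
  have h5 : Real.Gamma ((n : ℝ) + 1) = n.factorial := Real.Gamma_nat_eq_factorial n
  rw [h4, h5] at h
  have h6 : (0:ℝ) < 2 ^ n := by positivity
  field_simp at h ⊢
  linarith [h]

lemma key (n : ℕ) :
    2 * Real.Gamma ((2 * (n : ℝ) + 2) / 2) * Real.Gamma ((2 * (n : ℝ) + 3) / 2) *
        Real.Gamma (1 / 2)
      = ((n : ℝ) + 1) * catR (n + 1) * Real.Gamma (((n : ℝ) + 1) / 2) ^ 2 *
          Real.Gamma (((n : ℝ) + 2) / 2) * Real.Gamma (((n : ℝ) + 4) / 2) := by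
  have hab := dup n
  have hcd := dup (2 * n + 1)
  push_cast at hcd
  have e1 : (2 * (n : ℝ) + 1 + 1) / 2 = (2 * (n : ℝ) + 2) / 2 := by ring
  have e2 : (2 * (n : ℝ) + 1 + 2) / 2 = (2 * (n : ℝ) + 3) / 2 := by ring
  rw [e1, e2] at hcd
  have hd : Real.Gamma (((n : ℝ) + 4) / 2) = (((n : ℝ) + 2) / 2) * Real.Gamma (((n : ℝ) + 2) / 2) := by
    have : ((n : ℝ) + 4) / 2 = ((n : ℝ) + 2) / 2 + 1 := by ring
    rw [this, Real.Gamma_add_one (by positivity)]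
  have hg : Real.Gamma (1 / 2 : ℝ) = Real.sqrt π := Real.Gamma_one_half_eq
  -- choose identity
  have hC : ((2 * n + 2).choose (n + 1) : ℝ) * ((n + 1).factorial : ℝ) ^ 2
      = ((2 * n + 1).factorial : ℝ) * (2 * (n : ℝ) + 2) := by
    have h := Nat.choose_mul_factorial_mul_factorial (show n + 1 ≤ 2 * n + 2 by omega)
    rw [show 2 * n + 2 - (n + 1) = n + 1 from by omega, Nat.factorial_succ (2 * n + 1)] at h
    have h2 := congrArg (Nat.cast (R := ℝ)) h
    push_cast at h2
    rw [sq]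
    linarith [h2]
  have hcat : catR (n + 1) = (1 / ((n : ℝ) + 2)) * ((2 * n + 2).choose (n + 1) : ℝ) := by
    simp only [catR]
    push_cast
    ring_nf
  have hfs : ((n + 1).factorial : ℝ) = ((n : ℝ) + 1) * (n.factorial : ℝ) := by
    push_cast [Nat.factorial_succ]; ring
  set a := Real.Gamma (((n : ℝ) + 1) / 2)
  set b := Real.Gamma (((n : ℝ) + 2) / 2)
  set c := Real.Gamma ((2 * (n : ℝ) + 3) / 2)
  set p := Real.sqrt π
  have hΓ : Real.Gamma ((2 * (n : ℝ) + 2) / 2) = (n.factorial : ℝ) := by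
    have : (2 * (n : ℝ) + 2) / 2 = (n : ℝ) + 1 := by ring
    rw [this, Real.Gamma_nat_eq_factorial]
  rw [hΓ, hd, hg, hcat]
  rw [hΓ] at hcd
  have hC' : ((2 * n + 2).choose (n + 1) : ℝ) * (((n : ℝ) + 1) * (n.factorial : ℝ)) ^ 2
      = ((2 * n + 1).factorial : ℝ) * (2 * (n : ℝ) + 2) := by rw [← hfs]; exact hC
  have hab2 : (a * b) ^ 2 * ((2 : ℝ) ^ n) ^ 2 = ((n.factorial : ℝ) * p) ^ 2 := by
    rw [← hab]; ring
  have hpow : (2:ℝ) ^ (2 * n + 1) = 2 * ((2:ℝ) ^ n) ^ 2 := by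
    rw [pow_succ, mul_comm 2 n, pow_mul]; ring
  rw [hpow] at hcd
  set F := (n.factorial : ℝ)
  set G := ((2 * n + 1).factorial : ℝ)
  set Ch := ((2 * n + 2).choose (n + 1) : ℝ)
  have hM : ((2:ℝ) ^ n) ^ 2 * ((n:ℝ) + 1) ≠ 0 := by positivity
  have key2 : 4 * F * c * p = ((n:ℝ) + 1) * Ch * a ^ 2 * b ^ 2 := by
    have h2 : (4 * F * c * p) * (((2:ℝ) ^ n) ^ 2 * ((n:ℝ) + 1))
        = (((n:ℝ) + 1) * Ch * a ^ 2 * b ^ 2) * (((2:ℝ) ^ n) ^ 2 * ((n:ℝ) + 1)) := by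
      linear_combination (2 * p * ((n:ℝ) + 1)) * hcd - ((n:ℝ) + 1) ^ 2 * Ch * hab2
        - p ^ 2 * hC'
    exact mul_right_cancel₀ hM h2
  have hn2 : ((n:ℝ) + 2) ≠ 0 := by positivity
  field_simp
  linear_combination key2

lemma A_succ (n : ℕ) :
    (∏ j ∈ Finset.range (n + 1), Real.Gamma ((((n : ℝ) + 1) + 2 + j) / 2)) *
        Real.Gamma (((n : ℝ) + 2) / 2)
      = (∏ j ∈ Finset.range n, Real.Gamma (((n : ℝ) + 2 + j) / 2)) *
          Real.Gamma ((2 * (n : ℝ) + 2) / 2) * Real.Gamma ((2 * (n : ℝ) + 3) / 2) := by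
  set F : ℕ → ℝ := fun j => Real.Gamma (((n : ℝ) + 2 + j) / 2) with hF
  have e1 : ∏ j ∈ Finset.range (n + 2), F j
      = (∏ j ∈ Finset.range (n + 1), F (j + 1)) * F 0 := Finset.prod_range_succ' F (n + 1)
  have e2 : ∏ j ∈ Finset.range (n + 2), F j
      = ((∏ j ∈ Finset.range n, F j) * F n) * F (n + 1) := by
    rw [Finset.prod_range_succ, Finset.prod_range_succ]
  have e3 : ∏ j ∈ Finset.range (n + 1), F (j + 1)
      = ∏ j ∈ Finset.range (n + 1), Real.Gamma ((((n : ℝ) + 1) + 2 + j) / 2) := by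
    apply Finset.prod_congr rfl
    intro j _
    simp only [hF]
    push_cast
    ring_nf
  have h0 : F 0 = Real.Gamma (((n : ℝ) + 2) / 2) := by simp [hF]
  have hn : F n = Real.Gamma ((2 * (n : ℝ) + 2) / 2) := by
    simp only [hF]; ring_nf
  have hn1 : F (n + 1) = Real.Gamma ((2 * (n : ℝ) + 3) / 2) := by
    simp only [hF]; push_cast; ring_nf
  rw [← e3, ← h0, ← e1, e2, hn, hn1]

lemma main' (n : ℕ) (hn : 1 ≤ n) :
    (2 : ℝ) ^ (n ^ 2 + n) * (∏ j ∈ Finset.range n, Real.Gamma (((n : ℝ) + 2 + j) / 2)) *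
        Real.Gamma (1 / 2) ^ n
      = (2 : ℝ) ^ (n ^ 2) * (∏ k ∈ Finset.Icc 1 n, catR k) * (n.factorial : ℝ) *
          ((∏ j ∈ Finset.range n, Real.Gamma ((1 + (j : ℝ)) / 2)) ^ 2 *
            ∏ j ∈ Finset.range n, Real.Gamma ((4 + (j : ℝ)) / 2)) := by
  induction n, hn using Nat.le_induction with
  | base =>
    simp only [Finset.prod_range_one, Finset.Icc_self, Finset.prod_singleton]
    norm_num
    have h32 : Real.Gamma (3 / 2 : ℝ) = (1 / 2) * Real.Gamma (1 / 2) := by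
      rw [show (3 / 2 : ℝ) = 1 / 2 + 1 by norm_num, Real.Gamma_add_one (by norm_num)]
    rw [h32]
    simp [catR]
    ring
  | succ n hn ih =>
    -- names
    have hb : Real.Gamma (((n : ℝ) + 2) / 2) ≠ 0 :=
      ne_of_gt (Real.Gamma_pos_of_pos (by positivity))
    have hA := A_succ n
    have hkey := key n
    have hIcc : ∏ k ∈ Finset.Icc 1 (n + 1), catR k
        = (∏ k ∈ Finset.Icc 1 n, catR k) * catR (n + 1) :=
      Finset.prod_Icc_succ_top (by omega) _
    have hBs : ∏ j ∈ Finset.range (n + 1), Real.Gamma ((1 + (j : ℝ)) / 2)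
        = (∏ j ∈ Finset.range n, Real.Gamma ((1 + (j : ℝ)) / 2)) *
            Real.Gamma ((1 + (n : ℝ)) / 2) := by
      rw [Finset.prod_range_succ]
    have hDs : ∏ j ∈ Finset.range (n + 1), Real.Gamma ((4 + (j : ℝ)) / 2)
        = (∏ j ∈ Finset.range n, Real.Gamma ((4 + (j : ℝ)) / 2)) *
            Real.Gamma ((4 + (n : ℝ)) / 2) := by
      rw [Finset.prod_range_succ]
    rw [hIcc, hBs, hDs, Nat.factorial_succ]
    push_cast
    rw [show (n+1)^2+(n+1) = (n^2+n)+(2*n+2) from by ring,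
        show (n+1)^2 = n^2+(2*n+1) from by ring, pow_add, pow_add]
    rw [show ((1:ℝ)+(n:ℝ))/2 = ((n:ℝ)+1)/2 from by ring,
        show ((4:ℝ)+(n:ℝ))/2 = ((n:ℝ)+4)/2 from by ring]
    apply mul_right_cancel₀ hb
    linear_combination
      ((2:ℝ)^(n^2+n) * (2:ℝ)^(2*n+2) * Real.Gamma (1/2:ℝ)^(n+1)) * hA
      + ((2:ℝ)^(2*n+2) * Real.Gamma (1/2:ℝ) * Real.Gamma ((2*(n:ℝ)+2)/2)
          * Real.Gamma ((2*(n:ℝ)+3)/2)) * ih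
      + ((2:ℝ)^(2*n+1) * (2:ℝ)^(n^2) * (∏ k ∈ Finset.Icc 1 n, catR k) * (n.factorial : ℝ)
          * (∏ j ∈ Finset.range n, Real.Gamma ((1 + (j : ℝ)) / 2))^2
          * (∏ j ∈ Finset.range n, Real.Gamma ((4 + (j : ℝ)) / 2))) * hkey

/-- (2^{n²+n}/n!)·∏_{j=0}^{n-1} Γ((n+2+j)/2)Γ(1/2)/(Γ((1+j)/2)²Γ((4+j)/2))
= 2^{n²}·∏_{k=1}^n Cat(k). -/
theorem stmt3 (n : ℕ) (hn : 0 < n) :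
    ((2 : ℝ) ^ (n ^ 2 + n) / (n.factorial : ℝ)) *
      ∏ j ∈ Finset.range n,
        Real.Gamma (((n : ℝ) + 2 + j) / 2) * Real.Gamma (1 / 2) /
          (Real.Gamma ((1 + (j : ℝ)) / 2) * Real.Gamma ((1 + (j : ℝ)) / 2) *
            Real.Gamma ((4 + (j : ℝ)) / 2)) =
      (2 : ℝ) ^ (n ^ 2) * ∏ k ∈ Finset.Icc 1 n, catR k := by
  have hm := main' n hn
  have hB : (0:ℝ) < ∏ j ∈ Finset.range n, Real.Gamma ((1 + (j:ℝ)) / 2) :=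
    Finset.prod_pos fun j _ => Real.Gamma_pos_of_pos (by positivity)
  have hD : (0:ℝ) < ∏ j ∈ Finset.range n, Real.Gamma ((4 + (j:ℝ)) / 2) :=
    Finset.prod_pos fun j _ => Real.Gamma_pos_of_pos (by positivity)
  have hF : (0:ℝ) < (n.factorial : ℝ) := by positivity
  simp only [Finset.prod_div_distrib, Finset.prod_mul_distrib, Finset.prod_const]
  rw [Finset.card_range, div_mul_eq_mul_div, div_eq_iff (ne_of_gt hF), mul_div_assoc',
    div_eq_iff (ne_of_gt (mul_pos (mul_pos hB hB) hD))]
  linear_combination hm
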